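/- Let X₁ and X₂ be nonempty connected open subsets of ℂ, let f₁ : X₁ → ℂ and f₂ : X₂ → ℂ be analytic and non-constant, and let a ∈ X₁ and b ∈ X₂ be marked points. Suppose φ₁ : X₁ → ℂ and φ₂ : X₂ → ℂ are analytic and injective, with φ₁(X₁) ⊆ X₂, φ₂(X₂) ⊆ X₁, f₂(φ₁(z)) = f₁(z) for all z ∈ X₁, f₁(φ₂(w)) = f₂(w) for all w ∈ X₂, φ₁(a) = b and φ₂(b) = a. Then φ₁(X₁) = X₂ and φ₂(X₂) = X₁; that is, the two marked partial covers are structurally equivalent (the sub-structure preorder is an order on connected structures with a marked point). -/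

import Mathlib

open Filter Topology

private theorem factor_aux (F : ℂ → ℂ) (a : ℂ) (hF : AnalyticAt ℂ F a) (hFa : F a = 0)
    (hnc : ¬ ∀ᶠ z in 𝓝 a, F z = 0) :
    ∃ n : ℕ, 1 ≤ n ∧ ∃ G : ℂ → ℂ, AnalyticAt ℂ G a ∧ G a ≠ 0 ∧
      (∀ᶠ z in 𝓝 a, F z = (z - a) ^ n * G z) ∧ analyticOrderAt F a = n := by
  have hord : analyticOrderAt F a ≠ ⊤ := by
    simpa [analyticOrderAt_eq_top] using hnc
  obtain ⟨n, hn⟩ : ∃ n : ℕ, analyticOrderAt F a = n := by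
    lift analyticOrderAt F a to ℕ using hord with n hn
    exact ⟨n, rfl⟩
  obtain ⟨G, hG, hGa, hfac⟩ := (hF.analyticOrderAt_eq_natCast (n := n)).mp hn
  refine ⟨n, ?_, G, hG, hGa, by simpa [smul_eq_mul] using hfac, hn⟩
  rcases Nat.eq_zero_or_pos n with h0 | h1
  · exfalso
    have := hfac.self_of_nhds
    rw [h0] at this
    simp [hFa] at this
    exact hGa this.symm
  · exact h1

private theorem key_local (f g : ℂ → ℂ) (a : ℂ)
    (hf : AnalyticAt ℂ f a) (hg : AnalyticAt ℂ g a) (hga : g a = a)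
    (hfnc : ¬ ∀ᶠ z in 𝓝 a, f z = f a)
    (hgnc : ¬ ∀ᶠ z in 𝓝 a, g z = a)
    (hcomm : ∀ᶠ z in 𝓝 a, f (g z) = f z) :
    ∃ n : ℕ, 1 ≤ n ∧ ∀ᶠ z in 𝓝 a, g^[n] z = z := by
  have hgt : Filter.Tendsto g (𝓝 a) (𝓝 a) := by
    have := hg.continuousAt.tendsto
    rwa [hga] at this
  -- factor F := f - f a
  obtain ⟨n, hn1, G, hG, hGa, hFfac, -⟩ :=
    factor_aux (fun z => f z - f a) a (hf.sub analyticAt_const) (by simp)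
      (by simpa [sub_eq_zero] using hfnc)
  -- factor u := g - a
  obtain ⟨m, hm1, v, hv, hva, hufac, -⟩ :=
    factor_aux (fun z => g z - a) a (hg.sub analyticAt_const) (by simp [hga])
      (by simpa [sub_eq_zero] using hgnc)
  -- m = 1
  have hFg : ∀ᶠ z in 𝓝 a, f (g z) - f a = (g z - a) ^ n * G (g z) := hgt.eventually hFfac
  have hFcomb : ∀ᶠ z in 𝓝 a, f z - f a = (z - a) ^ (n * m) * ((v z) ^ n * G (g z)) := by
    filter_upwards [hFg, hufac, hcomm] with z h1 h2 h3
    rw [← h3, h1, h2]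
    ring
  have hAcomp : AnalyticAt ℂ (fun z => (v z) ^ n * G (g z)) a := by
    have : AnalyticAt ℂ (G ∘ g) a := by
      apply AnalyticAt.comp
      · rwa [hga]
      · exact hg
    exact (hv.pow n).mul this
  have hord2 : analyticOrderAt (fun z => f z - f a) a = (n * m : ℕ) := by
    rw [AnalyticAt.analyticOrderAt_eq_natCast (f := fun z => f z - f a) (hf.sub analyticAt_const)]
    exact ⟨_, hAcomp, by simp [hga, hva, hGa, pow_ne_zero], by simpa [smul_eq_mul] using hFcomb⟩
  have hordn : analyticOrderAt (fun z => f z - f a) a = (n : ℕ) := by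
    rw [AnalyticAt.analyticOrderAt_eq_natCast (f := fun z => f z - f a) (hf.sub analyticAt_const)]
    exact ⟨G, hG, hGa, by simpa [smul_eq_mul] using hFfac⟩
  have hnm : n * m = n := by
    have := hord2.symm.trans hordn
    exact_mod_cast this
  have hm : m = 1 := by
    rcases m with _ | m
    · omega
    · rcases Nat.eq_zero_or_pos m with h | h
      · omega
      · exfalso
        have : n * (m + 1) ≥ n * 2 := Nat.mul_le_mul_left n (by omega)
        omega
  subst hm
  -- Step B : (v a) ^ n = 1
  have hAB : ∀ᶠ z in 𝓝[≠] a, v z ^ n * G (g z) = G z := by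
    have hev : ∀ᶠ z in 𝓝 a, (z - a) ^ n * (v z ^ n * G (g z)) = (z - a) ^ n * G z := by
      filter_upwards [hFcomb, hFfac] with z h1 h2
      rw [mul_one] at h1
      rw [← h1, ← h2]
    filter_upwards [eventually_nhdsWithin_of_eventually_nhds hev, self_mem_nhdsWithin]
      with z h1 h2
    exact mul_left_cancel₀ (pow_ne_zero _ (sub_ne_zero.mpr h2)) h1
  have hlam : v a ^ n = 1 := by
    have h1 : Filter.Tendsto (fun z => v z ^ n * G (g z)) (𝓝[≠] a) (𝓝 (v a ^ n * G (g a))) :=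
      hAcomp.continuousAt.continuousWithinAt
    have h2 : Filter.Tendsto (fun z => v z ^ n * G (g z)) (𝓝[≠] a) (𝓝 (G a)) :=
      (hG.continuousAt.continuousWithinAt : Filter.Tendsto G (𝓝[≠] a) (𝓝 (G a))).congr'
        (hAB.mono fun z hz => hz.symm)
    have := tendsto_nhds_unique h1 h2
    rw [hga] at this
    have : v a ^ n * G a = 1 * G a := by rw [this, one_mul]
    exact mul_right_cancel₀ hGa this
  -- Step C : properties of iterates
  have hiter : ∀ j : ℕ, AnalyticAt ℂ (g^[j]) a ∧ g^[j] a = a ∧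
      (∀ᶠ z in 𝓝 a, f (g^[j] z) = f z) ∧
      ∃ w : ℂ → ℂ, AnalyticAt ℂ w a ∧ w a = (v a) ^ j ∧
        ∀ᶠ z in 𝓝 a, g^[j] z - a = (z - a) * w z := by
    intro j
    induction j with
    | zero =>
      exact ⟨analyticAt_id, rfl, by simp, fun _ => 1, analyticAt_const, by simp, by simp⟩
    | succ j ih =>
      obtain ⟨hja, hjfix, hjf, w, hw, hwa, hww⟩ := ih
      have hjt : Filter.Tendsto (g^[j]) (𝓝 a) (𝓝 a) := by
        have := hja.continuousAt.tendsto; rwa [hjfix] at this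
      have hvcomp : AnalyticAt ℂ (fun z => v (g^[j] z)) a := by
        have : AnalyticAt ℂ (v ∘ g^[j]) a := AnalyticAt.comp (by rwa [hjfix]) hja
        exact this
      refine ⟨?_, ?_, ?_, fun z => w z * v (g^[j] z), hw.mul hvcomp, ?_, ?_⟩
      · rw [Function.iterate_succ']
        exact AnalyticAt.comp (by rwa [hjfix]) hja
      · simp [Function.iterate_succ_apply', hjfix, hga]
      · filter_upwards [hjt.eventually hcomm, hjf] with z h1 h2
        rw [Function.iterate_succ_apply', h1, h2]
      · simp [hjfix, hwa, hva, pow_succ]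
      · filter_upwards [hjt.eventually hufac, hww] with z h1 h2
        rw [Function.iterate_succ_apply', h1, h2]
        ring
  -- Step D
  obtain ⟨hha, hhfix, hhf, w, hw, hwa, hww⟩ := hiter n
  rw [hlam] at hwa
  have hht : Filter.Tendsto (g^[n]) (𝓝 a) (𝓝 a) := by
    have := hha.continuousAt.tendsto; rwa [hhfix] at this
  refine ⟨n, hn1, ?_⟩
  by_contra hne
  obtain ⟨k, hk1, e, he, hea, hdfac, -⟩ :=
    factor_aux (fun z => g^[n] z - z) a (hha.sub analyticAt_id) (by simp [hhfix])
      (by simpa [sub_eq_zero] using hne)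
  have hkey : ∀ᶠ z in 𝓝 a,
      (z - a) ^ (n + 1) * (G (g^[n] z) - G z)
        = -((z - a) ^ k * e z *
            ((z - a) ^ n * (∑ i ∈ Finset.range n, w z ^ i) * G (g^[n] z))) := by
    filter_upwards [hht.eventually hFfac, hFfac, hhf, hww, hdfac] with z h1 h2 h3 h4 h5
    have hi : (z - a) ^ n * (w z) ^ n * G (g^[n] z) = (z - a) ^ n * G z := by
      rw [← h2, ← h3, h1, h4, mul_pow]
    have hii : (z - a) * (w z - 1) = (z - a) ^ k * e z := by
      linear_combination h5 - h4
    have hiii : (∑ i ∈ Finset.range n, w z ^ i) * (w z - 1) = w z ^ n - 1 :=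
      geom_sum_mul _ _
    linear_combination (z - a) * hi + (z - a) ^ (n + 1) * G (g^[n] z) * hiii
      - (z - a) ^ n * (∑ i ∈ Finset.range n, w z ^ i) * G (g^[n] z) * hii
  -- Lipschitz bound for G near a
  obtain ⟨K, tset, htset, hlip⟩ :=
    ((hG.contDiffAt : ContDiffAt ℂ 1 G a)).exists_lipschitzOnWith
  -- continuity lower/upper bounds
  have hGh : Filter.Tendsto (fun z => ‖G (g^[n] z)‖) (𝓝 a) (𝓝 ‖G a‖) := by
    have h1 : Filter.Tendsto (G ∘ g^[n]) (𝓝 a) (𝓝 (G a)) :=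
      Filter.Tendsto.comp (hG.continuousAt.tendsto) hht
    exact h1.norm
  have hb1 : ∀ᶠ z in 𝓝 a, ‖G a‖ / 2 < ‖G (g^[n] z)‖ :=
    hGh.eventually_const_lt (by have := norm_pos_iff.mpr hGa; linarith)
  have hQt : Filter.Tendsto (fun z => ‖∑ i ∈ Finset.range n, w z ^ i‖) (𝓝 a) (𝓝 (n : ℝ)) := by
    have h1 : Filter.Tendsto (fun z => ∑ i ∈ Finset.range n, w z ^ i) (𝓝 a)
        (𝓝 (∑ i ∈ Finset.range n, (w a) ^ i)) := by
      apply tendsto_finset_sum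
      intro i _
      exact (hw.continuousAt.tendsto).pow i
    have h2 : (∑ i ∈ Finset.range n, (w a) ^ i) = (n : ℂ) := by simp [hwa]
    rw [h2] at h1
    simpa using h1.norm
  have hb2 : ∀ᶠ z in 𝓝 a, (1:ℝ) / 2 < ‖∑ i ∈ Finset.range n, w z ^ i‖ := by
    apply hQt.eventually_const_lt
    have : (1:ℝ) ≤ (n:ℝ) := by exact_mod_cast hn1
    linarith
  have het : Filter.Tendsto (fun z => ‖e z‖) (𝓝 a) (𝓝 ‖e a‖) := he.continuousAt.tendsto.norm
  have hb3 : ∀ᶠ z in 𝓝 a, ‖e a‖ / 2 < ‖e z‖ :=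
    het.eventually_const_lt (by have := norm_pos_iff.mpr hea; linarith)
  have hb4 : ∀ᶠ z in 𝓝 a, ‖e z‖ < ‖e a‖ + 1 :=
    het.eventually_lt_const (by linarith [norm_nonneg (e a)])
  set c : ℝ := ‖e a‖ / 2 * (1 / 2) * (‖G a‖ / 2) with hc
  have hcpos : 0 < c := by
    have h1 : 0 < ‖e a‖ := norm_pos_iff.mpr hea
    have h2 : 0 < ‖G a‖ := norm_pos_iff.mpr hGa
    positivity
  set C : ℝ := (K : ℝ) * (‖e a‖ + 1) with hC
  have hCnn : 0 ≤ C := by positivity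
  have hmain : ∀ᶠ z in 𝓝 a,
      c * ‖z - a‖ ^ (n + k) ≤ C * ‖z - a‖ ^ (n + k + 1) := by
    filter_upwards [hkey, hdfac, hb1, hb2, hb3, hb4, htset, hht.eventually htset]
      with z hkz hd hz1 hz2 hz3 hz4 hm1 hm2
    have hnorm : ‖z - a‖ ^ (n + 1) * ‖G (g^[n] z) - G z‖
        = ‖z - a‖ ^ k * ‖e z‖ *
          (‖z - a‖ ^ n * ‖∑ i ∈ Finset.range n, w z ^ i‖ * ‖G (g^[n] z)‖) := by
      have := congrArg norm hkz
      simpa [norm_mul, norm_pow] using this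
    have hlipz : ‖G (g^[n] z) - G z‖ ≤ (K : ℝ) * ‖g^[n] z - z‖ := by
      have := hlip.dist_le_mul _ hm2 _ hm1
      simpa [dist_eq_norm] using this
    have hd' : ‖g^[n] z - z‖ = ‖z - a‖ ^ k * ‖e z‖ := by
      rw [hd, norm_mul, norm_pow]
    calc c * ‖z - a‖ ^ (n + k)
        = (‖z - a‖ ^ k * ‖z - a‖ ^ n) * (‖e a‖ / 2 * (1 / 2) * (‖G a‖ / 2)) := by
          rw [hc]; ring
      _ ≤ (‖z - a‖ ^ k * ‖z - a‖ ^ n) *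
          (‖e z‖ * ‖∑ i ∈ Finset.range n, w z ^ i‖ * ‖G (g^[n] z)‖) := by
          apply mul_le_mul_of_nonneg_left _ (by positivity)
          apply mul_le_mul _ hz1.le (by positivity) (by positivity)
          exact mul_le_mul hz3.le hz2.le (by norm_num) (norm_nonneg _)
      _ = ‖z - a‖ ^ (n + 1) * ‖G (g^[n] z) - G z‖ := by linear_combination -hnorm
      _ ≤ ‖z - a‖ ^ (n + 1) * ((K : ℝ) * ‖g^[n] z - z‖) :=
          mul_le_mul_of_nonneg_left hlipz (by positivity)
      _ = ‖z - a‖ ^ (n + 1) * ((K : ℝ) * (‖z - a‖ ^ k * ‖e z‖)) := by rw [hd']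
      _ ≤ ‖z - a‖ ^ (n + 1) * ((K : ℝ) * (‖z - a‖ ^ k * (‖e a‖ + 1))) := by
          gcongr
      _ = C * ‖z - a‖ ^ (n + k + 1) := by rw [hC]; ring
  have hsmall : ∀ᶠ z in 𝓝 a, ‖z - a‖ < c / (C + 1) := by
    have h1 : Filter.Tendsto (fun z : ℂ => ‖z - a‖) (𝓝 a) (𝓝 0) := by
      have : Filter.Tendsto (fun z : ℂ => z - a) (𝓝 a) (𝓝 (a - a)) :=
        (continuous_id.sub continuous_const).continuousAt.tendsto
      rw [sub_self] at this
      simpa using this.norm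
    exact h1.eventually_lt_const (by positivity)
  obtain ⟨z, ⟨hz1, hz2⟩, hz3⟩ :=
    (((hmain.and hsmall).filter_mono (nhdsWithin_le_nhds (s := {a}ᶜ))).and
      self_mem_nhdsWithin).exists
  have hzne : z - a ≠ 0 := sub_ne_zero.mpr hz3
  have ht : 0 < ‖z - a‖ := norm_pos_iff.mpr hzne
  have h1 : C * ‖z - a‖ < c := by
    have ha1 : C * ‖z - a‖ ≤ (C + 1) * ‖z - a‖ :=
      mul_le_mul_of_nonneg_right (by linarith) ht.le
    have ha2 : (C + 1) * ‖z - a‖ < (C + 1) * (c / (C + 1)) :=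
      mul_lt_mul_of_pos_left hz2 (by linarith)
    have ha3 : (C + 1) * (c / (C + 1)) = c := by
      field_simp
    linarith
  have h2 : C * ‖z - a‖ ^ (n + k + 1) < c * ‖z - a‖ ^ (n + k) := by
    have hp : ‖z - a‖ ^ (n + k + 1) = ‖z - a‖ * ‖z - a‖ ^ (n + k) := by ring
    rw [hp]
    calc C * (‖z - a‖ * ‖z - a‖ ^ (n + k)) = (C * ‖z - a‖) * ‖z - a‖ ^ (n + k) := by ring
      _ < c * ‖z - a‖ ^ (n + k) := mul_lt_mul_of_pos_right h1 (pow_pos ht _)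
  linarith

private theorem half_surj (X₁ X₂ : Set ℂ) (hX₁o : IsOpen X₁) (hX₁c : IsConnected X₁)
    (f₁ φ₁ φ₂ : ℂ → ℂ) (a : ℂ) (ha : a ∈ X₁)
    (hf₁ : AnalyticOnNhd ℂ f₁ X₁)
    (hf₁nc : ¬ ∃ c : ℂ, ∀ z ∈ X₁, f₁ z = c)
    (hφ₁ : AnalyticOnNhd ℂ φ₁ X₁) (hφ₂ : AnalyticOnNhd ℂ φ₂ X₂)
    (hφ₁inj : Set.InjOn φ₁ X₁) (hφ₂inj : Set.InjOn φ₂ X₂)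
    (hφ₁maps : Set.MapsTo φ₁ X₁ X₂) (hφ₂maps : Set.MapsTo φ₂ X₂ X₁)
    (hcomm : ∀ z ∈ X₁, f₁ (φ₂ (φ₁ z)) = f₁ z)
    (hmark : φ₂ (φ₁ a) = a) :
    φ₂ '' X₂ = X₁ := by
  set ψ : ℂ → ℂ := fun z => φ₂ (φ₁ z) with hψ
  have hX₁nhd : X₁ ∈ 𝓝 a := hX₁o.mem_nhds ha
  have hψan : AnalyticOnNhd ℂ ψ X₁ := fun z hz =>
    ((hφ₂ _ (hφ₁maps hz)).comp (hφ₁ z hz) : AnalyticAt ℂ (φ₂ ∘ φ₁) z)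
  have hψmaps : Set.MapsTo ψ X₁ X₁ := fun z hz => hφ₂maps (hφ₁maps hz)
  have hψinj : Set.InjOn ψ X₁ := fun x hx y hy hxy =>
    hφ₁inj hx hy (hφ₂inj (hφ₁maps hx) (hφ₁maps hy) hxy)
  have hψa : ψ a = a := hmark
  have hfnc : ¬ ∀ᶠ z in 𝓝 a, f₁ z = f₁ a := by
    intro h
    apply hf₁nc
    refine ⟨f₁ a, fun z hz => ?_⟩
    exact hf₁.eqOn_of_preconnected_of_eventuallyEq (g := fun _ => f₁ a)
      (fun z _ => analyticAt_const) hX₁c.isPreconnected ha h hz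
  have hψnc : ¬ ∀ᶠ z in 𝓝 a, ψ z = a := by
    intro h
    have h2 : ∀ᶠ z in 𝓝[≠] a, (ψ z = a ∧ z ∈ X₁) ∧ z ≠ a :=
      (eventually_nhdsWithin_of_eventually_nhds
        (h.and (by exact hX₁nhd : ∀ᶠ z in 𝓝 a, z ∈ X₁))).and self_mem_nhdsWithin
    obtain ⟨z, ⟨hz1, hz2⟩, hz3⟩ := h2.exists
    exact hz3 (hψinj hz2 ha (by rw [hz1, hψa]))
  have hcomm' : ∀ᶠ z in 𝓝 a, f₁ (ψ z) = f₁ z := by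
    filter_upwards [hX₁nhd] with z hz using hcomm z hz
  obtain ⟨n, hn1, hev⟩ := key_local f₁ ψ a (hf₁ a ha) (hψan a ha) hψa hfnc hψnc hcomm'
  have hitan : ∀ j, AnalyticOnNhd ℂ (ψ^[j]) X₁ := by
    intro j
    induction j with
    | zero => exact fun z hz => analyticAt_id
    | succ j ih =>
      intro z hz
      rw [Function.iterate_succ']
      exact (hψan _ (hψmaps.iterate j hz)).comp (ih z hz)
  have heq : Set.EqOn (ψ^[n]) id X₁ :=
    (hitan n).eqOn_of_preconnected_of_eventuallyEq (g := id)
      (fun z _ => analyticAt_id) hX₁c.isPreconnected ha (by simpa [Filter.EventuallyEq] using hev)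
  apply Set.Subset.antisymm (Set.MapsTo.image_subset hφ₂maps)
  intro z hz
  have h1 : ψ^[n] z = z := heq hz
  obtain ⟨n', rfl⟩ : ∃ n', n = n' + 1 := ⟨n - 1, by omega⟩
  have h2 : ψ^[n'] z ∈ X₁ := hψmaps.iterate n' hz
  refine ⟨φ₁ (ψ^[n'] z), hφ₁maps h2, ?_⟩
  show ψ (ψ^[n'] z) = z
  rw [← Function.iterate_succ_apply' ψ n' z]
  exact h1



/-- The sub-structure preorder is an order on connected marked analytic partial
covers over `ℂ`: if each of `(a, f₁)` and `(b, f₂)` is a sub-structure of the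
other (via analytic injections `φ₁`, `φ₂` respecting the maps and the marked
points), then `φ₁` and `φ₂` are surjective, i.e. the two structures are
equivalent. -/
theorem structural_preorder_is_order_on_marked_connected
    (X₁ X₂ : Set ℂ) (hX₁o : IsOpen X₁) (hX₂o : IsOpen X₂)
    (hX₁c : IsConnected X₁) (hX₂c : IsConnected X₂)
    (f₁ f₂ φ₁ φ₂ : ℂ → ℂ) (a b : ℂ)
    (ha : a ∈ X₁) (hb : b ∈ X₂)
    (hf₁ : AnalyticOnNhd ℂ f₁ X₁) (hf₂ : AnalyticOnNhd ℂ f₂ X₂)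
    (hf₁nc : ¬ ∃ c : ℂ, ∀ z ∈ X₁, f₁ z = c)
    (hf₂nc : ¬ ∃ c : ℂ, ∀ z ∈ X₂, f₂ z = c)
    (hφ₁ : AnalyticOnNhd ℂ φ₁ X₁) (hφ₂ : AnalyticOnNhd ℂ φ₂ X₂)
    (hφ₁inj : Set.InjOn φ₁ X₁) (hφ₂inj : Set.InjOn φ₂ X₂)
    (hφ₁maps : Set.MapsTo φ₁ X₁ X₂) (hφ₂maps : Set.MapsTo φ₂ X₂ X₁)
    (hcomm₁ : ∀ z ∈ X₁, f₂ (φ₁ z) = f₁ z)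
    (hcomm₂ : ∀ w ∈ X₂, f₁ (φ₂ w) = f₂ w)
    (hmark₁ : φ₁ a = b) (hmark₂ : φ₂ b = a) :
    φ₁ '' X₁ = X₂ ∧ φ₂ '' X₂ = X₁ := by
  constructor
  · exact half_surj X₂ X₁ hX₂o hX₂c f₂ φ₂ φ₁ b hb hf₂ hf₂nc hφ₂ hφ₁ hφ₂inj hφ₁inj
      hφ₂maps hφ₁maps
      (fun w hw => by rw [hcomm₁ _ (hφ₂maps hw), hcomm₂ _ hw])
      (by rw [hmark₂, hmark₁])
  · exact half_surj X₁ X₂ hX₁o hX₁c f₁ φ₁ φ₂ a ha hf₁ hf₁nc hφ₁ hφ₂ hφ₁inj hφ₂inj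
      hφ₁maps hφ₂maps
      (fun z hz => by rw [hcomm₂ _ (hφ₁maps hz), hcomm₁ _ hz])
      (by rw [hmark₁, hmark₂])
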